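/- For 3 ≤ n ≤ m, the correlation polynomials satisfy C_{M_n,M_m}(z) = C_{M_m,M_n}(z) = Σ_{b ∈ B_n ∩ B_m} z^{|b|−1}, where B_n, B_m are the sets of nonempty borders of M_n and M_m. -/

import Mathlib

/-- The Fibonacci morphism: `false` (=0) ↦ 01, `true` (=1) ↦ 0. -/
def phi (w : List Bool) : List Bool :=
  w.flatMap (fun b => if b then [false] else [false, true])

/-- The Fibonacci words: f₁ = 1, f₂ = 0, f_{n+2} = f_{n+1} f_n. -/
def fw : ℕ → List Bool
  | 0 => []
  | 1 => [true]
  | 2 => [false]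
  | (n+3) => fw (n+2) ++ fw (n+1)

/-- Palindromic prefix: f_n with its last two letters removed. -/
def pw (n : ℕ) : List Bool := (fw n).dropLast.dropLast

/-- Minimal forbidden words of the Fibonacci word:
`M_{2n+1} = 1 p_{2n+1} 1`, `M_{2n+2} = 0 p_{2n+2} 0`. -/
def Mw (n : ℕ) : List Bool :=
  if n % 2 = 0 then false :: (pw n ++ [false]) else true :: (pw n ++ [true])

/-- Correlation bit: `corr u v k` holds iff `C_{u,v}[k] = 1`. -/
def corr {α : Type*} (u v : List α) (k : ℕ) : Prop :=
  ∀ i j : ℕ, i < u.length → j < v.length → i = j + k → u[i]? = v[j]?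

/-- A border of a word is both a prefix and a suffix. -/
def IsBorder {α : Type*} (b w : List α) : Prop := b <+: w ∧ b <:+ w

/-- The set of nonempty borders of `M_n`. -/
def Bset (n : ℕ) : Set (List Bool) := {b | b ≠ [] ∧ IsBorder b (Mw n)}

open scoped Classical in
/-- The correlation polynomial `C_{u,v}(z) = ∑_{k<|u|} C_{u,v}[k] z^{|u|-1-k}`. -/
noncomputable def corrPoly (u v : List Bool) : Polynomial ℤ :=
  ∑ k ∈ Finset.range u.length,
    if corr u v k then Polynomial.X ^ (u.length - 1 - k) else 0

open scoped Classical in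
/-- The nonempty borders of `w`, as a finset. -/
noncomputable def borderFinset (w : List Bool) : Finset (List Bool) :=
  ((Finset.range (w.length + 1)).image (fun k => w.take k)).filter
    (fun b => b ≠ [] ∧ b <:+ w)


/-! Part 1: structure of Fibonacci words -/

/-- last-two-letters word -/
def tl (n : ℕ) : List Bool := if n % 2 = 1 then [false, true] else [true, false]

def bitn (n : ℕ) : Bool := decide (n % 2 = 1)

lemma Mw_eq (n : ℕ) : Mw n = bitn n :: (pw n ++ [bitn n]) := by
  unfold Mw bitn
  rcases Nat.mod_two_eq_zero_or_one n with h | h <;> simp [h]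

lemma tl_add_two (n : ℕ) : tl (n + 2) = tl n := by
  unfold tl; rcases Nat.mod_two_eq_zero_or_one n with h | h <;>
    simp [Nat.add_mod, h]

lemma tl_length (n : ℕ) : (tl n).length = 2 := by
  unfold tl; split <;> simp

lemma tl_ne_nil (n : ℕ) : tl n ≠ [] := by
  unfold tl; split <;> simp

lemma fw_succ_succ (n : ℕ) (hn : 1 ≤ n) : fw (n + 2) = fw (n + 1) ++ fw n := by
  obtain ⟨k, rfl⟩ := Nat.exists_eq_add_of_le hn
  show fw (1 + k + 2) = _
  have : 1 + k + 2 = k + 3 := by ring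
  rw [this, fw]
  congr 1 <;> congr 1 <;> omega

lemma fw_eq_pw_append : ∀ n, 3 ≤ n → fw n = pw n ++ tl n := by
  have key : ∀ k, ∀ n, 3 ≤ n → n ≤ k → fw n = pw n ++ tl n := by
    intro k
    induction k with
    | zero => intro n h1 h2; omega
    | succ K IH =>
      intro n h1 h2
      rcases Nat.lt_or_ge n (K+1) with h | h
      · exact IH n h1 (by omega)
      have hn : n = K + 1 := by omega
      subst hn
      -- n = K+1 ≥ 3
      match K, h1 with
      | 2, _ => decide
      | 3, _ => decide
      | (m+4), _ =>
        -- n = m+5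
        have h5 : fw (m+5) = fw (m+4) ++ fw (m+3) := fw_succ_succ (m+3) (by omega)
        have IH3 : fw (m+3) = pw (m+3) ++ tl (m+3) := IH (m+3) (by omega) (by omega)
        have hlen : 2 ≤ (fw (m+3)).length := by
          rw [IH3]; simp [tl_length]
        unfold pw
        rw [h5, IH3]
        rw [List.dropLast_append, List.dropLast_append]
        have h1' : (tl (m+3)) ≠ [] := tl_ne_nil _
        have h2' : (tl (m+3)).dropLast ≠ [] ∨ True := Or.inr trivial
        -- tl has length 2, so dropLast of it has length 1, nonempty
        unfold tl
        rcases Nat.mod_two_eq_zero_or_one (m+3) with hp | hp <;>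
          · simp only [hp]
            have : (m + 5) % 2 = (m+3) % 2 := by omega
            simp [this, hp, tl, List.dropLast_append]
  intro n hn; exact key n n hn le_rfl

lemma pw_succ_succ (n : ℕ) (hn : 3 ≤ n) : pw (n + 2) = fw (n + 1) ++ pw n := by
  unfold pw
  rw [fw_succ_succ n (by omega)]
  have h2 : 2 ≤ (fw n).length := by
    rw [fw_eq_pw_append n hn]; simp [tl_length]
  have hne : fw n ≠ [] := by intro h; rw [h] at h2; simp at h2
  have hne2 : (fw n).dropLast ≠ [] := by
    intro h
    have := congrArg List.length h
    simp [List.length_dropLast] at this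
    omega
  rw [List.dropLast_append]
  simp only [List.isEmpty_iff, if_neg hne]
  rw [List.dropLast_append]
  simp [hne2, List.isEmpty_iff]

/-! Part 2: lengths, commutation identity, palindromes -/

lemma dropLast2_append {α : Type*} (l₁ l₂ : List α) (h : 2 ≤ l₂.length) :
    (l₁ ++ l₂).dropLast.dropLast = l₁ ++ l₂.dropLast.dropLast := by
  have hne : l₂ ≠ [] := by intro hh; subst hh; simp at h
  have hne2 : l₂.dropLast ≠ [] := by
    intro hh; have := congrArg List.length hh; simp at this; omega
  rw [List.dropLast_append, if_neg (by simp [hne]), List.dropLast_append,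
    if_neg (by simp [hne2])]

lemma fw_ne_nil : ∀ n, 1 ≤ n → fw n ≠ [] := by
  intro n
  match n with
  | 0 => omega
  | 1 => intro _; decide
  | 2 => intro _; decide
  | (m+3) =>
    intro _
    rw [fw]
    intro h
    rcases List.append_eq_nil_iff.mp h with ⟨h1, h2⟩
    exact fw_ne_nil (m+2) (by omega) h1

lemma fw_len_lt (n : ℕ) (hn : 2 ≤ n) : (fw n).length < (fw (n+1)).length := by
  obtain ⟨k, rfl⟩ : ∃ k, n = k + 2 := ⟨n - 2, by omega⟩
  have h1 : fw (k+2+1) = fw (k+2) ++ fw (k+1) := fw_succ_succ (k+1) (by omega)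
  rw [h1, List.length_append]
  have := List.length_pos_iff.mpr (fw_ne_nil (k+1) (by omega))
  omega

lemma fw_len_mono (n m : ℕ) (h1 : 1 ≤ n) (h2 : n ≤ m) : (fw n).length ≤ (fw m).length := by
  induction m with
  | zero => omega
  | succ K IH =>
    rcases Nat.lt_or_ge n (K+1) with h | h
    · have step := IH (by omega)
      rcases Nat.lt_or_ge K 2 with hK2 | hK2
      · interval_cases K
        · omega
        · have : n = 1 := by omega
          subst this; decide
      · exact le_trans step (le_of_lt (fw_len_lt K hK2))
    · have : n = K + 1 := by omega
      subst this; exact le_rfl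

lemma fw_len_strict (n m : ℕ) (h1 : 2 ≤ n) (h2 : n < m) : (fw n).length < (fw m).length :=
  lt_of_lt_of_le (fw_len_lt n h1) (fw_len_mono (n+1) m (by omega) h2)

lemma fw_two_le_len (n : ℕ) (hn : 3 ≤ n) : 2 ≤ (fw n).length := by
  have : (fw 3).length ≤ (fw n).length := fw_len_mono 3 n (by omega) hn
  rw [show (fw 3).length = 2 by decide] at this; exact this

lemma pw_len (n : ℕ) (hn : 3 ≤ n) : (pw n).length + 2 = (fw n).length := by
  have := congrArg List.length (fw_eq_pw_append n hn)
  simp [tl_length] at this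
  omega

lemma Mw_len (n : ℕ) (hn : 3 ≤ n) : (Mw n).length = (fw n).length := by
  rw [Mw_eq]; simp [← pw_len n hn]

/-- commutation: dropLast² (f_{n+1} f_n) = dropLast² (f_n f_{n+1}) -/
lemma comm_ident : ∀ n, 1 ≤ n →
    (fw (n+1) ++ fw n).dropLast.dropLast = (fw n ++ fw (n+1)).dropLast.dropLast := by
  intro n
  induction n using Nat.strong_induction_on with
  | _ n IH =>
    intro hn
    match n, hn with
    | 1, _ => decide
    | 2, _ => decide
    | (m+3), _ =>
      have e1 : fw (m+4) = fw (m+3) ++ fw (m+2) := fw_succ_succ (m+2) (by omega)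
      have e2 : fw (m+3) = fw (m+2) ++ fw (m+1) := fw_succ_succ (m+1) (by omega)
      have IH' := IH (m+1) (by omega) (by omega)
      have l1 : 2 ≤ (fw (m+2) ++ fw (m+1)).length := by
        rw [List.length_append]
        have a1 := List.length_pos_iff.mpr (fw_ne_nil (m+1) (by omega))
        have a2 := List.length_pos_iff.mpr (fw_ne_nil (m+2) (by omega))
        omega
      have l2 : 2 ≤ (fw (m+1) ++ fw (m+2)).length := by
        rw [List.length_append]; rw [List.length_append] at l1; omega
      calc (fw (m+4) ++ fw (m+3)).dropLast.dropLast
          = (fw (m+3) ++ fw (m+2) ++ (fw (m+2) ++ fw (m+1))).dropLast.dropLast := by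
            rw [← e1, ← e2]
        _ = fw (m+3) ++ fw (m+2) ++ (fw (m+2) ++ fw (m+1)).dropLast.dropLast := by
            rw [dropLast2_append _ _ l1]
        _ = fw (m+3) ++ fw (m+2) ++ (fw (m+1) ++ fw (m+2)).dropLast.dropLast := by rw [IH']
        _ = (fw (m+3) ++ fw (m+2) ++ (fw (m+1) ++ fw (m+2))).dropLast.dropLast := by
            rw [dropLast2_append _ _ l2]
        _ = (fw (m+3) ++ fw (m+4)).dropLast.dropLast := by
            rw [e1, e2]; simp [List.append_assoc]

/-- f_{n+1} ++ p_n = f_n ++ p_{n+1} for n ≥ 3 -/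
lemma comm_pw (n : ℕ) (hn : 3 ≤ n) : fw (n+1) ++ pw n = fw n ++ pw (n+1) := by
  have h := comm_ident n (by omega)
  have a1 : 2 ≤ (fw n).length := fw_two_le_len n hn
  have a2 : 2 ≤ (fw (n+1)).length := fw_two_le_len (n+1) (by omega)
  rw [dropLast2_append _ _ a1, dropLast2_append _ _ a2] at h
  exact h

/-! Part 3: palindromes, prefix nesting, the letter after p_n -/

lemma tl_rev (n : ℕ) : (tl (n+1)).reverse = tl n := by
  unfold tl
  rcases Nat.mod_two_eq_zero_or_one n with h | h <;>
    simp [Nat.add_mod, h]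

lemma pal_aux : ∀ n, 3 ≤ n →
    ((pw n).reverse = pw n ∧ (fw n).reverse = (tl n).reverse ++ pw n) := by
  intro n
  induction n using Nat.strong_induction_on with
  | _ n IH =>
    intro hn
    match n, hn with
    | 3, _ => constructor <;> decide
    | 4, _ => constructor <;> decide
    | (m+5), _ =>
      set n := m + 3 with hn3
      have hB1 : (fw (n+1)).reverse = (tl (n+1)).reverse ++ pw (n+1) :=
        (IH (n+1) (by omega) (by omega)).2
      have hA0 : (pw n).reverse = pw n := (IH n (by omega) (by omega)).1
      have hB0 : (fw n).reverse = (tl n).reverse ++ pw n := (IH n (by omega) (by omega)).2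
      have hpr : pw (n+2) = fw (n+1) ++ pw n := pw_succ_succ n (by omega)
      have hfp : fw n = pw n ++ tl n := fw_eq_pw_append n (by omega)
      have hcomm : fw (n+1) ++ pw n = fw n ++ pw (n+1) := comm_pw n (by omega)
      have hA2 : (pw (n+2)).reverse = pw (n+2) := by
        rw [hpr, List.reverse_append, hA0, hB1, tl_rev n]
        calc pw n ++ ((tl n) ++ pw (n+1)) = (pw n ++ tl n) ++ pw (n+1) := by
              rw [List.append_assoc]
          _ = fw n ++ pw (n+1) := by rw [← hfp]
          _ = fw (n+1) ++ pw n := hcomm.symm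
      refine ⟨hA2, ?_⟩
      have hfw2 : fw (n+2) = fw (n+1) ++ fw n := fw_succ_succ n (by omega)
      rw [hfw2, List.reverse_append, hB0, hB1, tl_rev n]
      calc (tl n).reverse ++ pw n ++ ((tl n) ++ pw (n+1))
          = (tl n).reverse ++ ((pw n ++ tl n) ++ pw (n+1)) := by simp [List.append_assoc]
        _ = (tl n).reverse ++ (fw n ++ pw (n+1)) := by rw [← hfp]
        _ = (tl n).reverse ++ (fw (n+1) ++ pw n) := by rw [hcomm]
        _ = (tl (n+2)).reverse ++ pw (n+2) := by rw [hpr, tl_add_two n]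

lemma pw_reverse : ∀ n, (pw n).reverse = pw n := by
  intro n
  match n with
  | 0 => decide
  | 1 => decide
  | 2 => decide
  | (m+3) => exact (pal_aux (m+3) (by omega)).1

lemma Mw_reverse (n : ℕ) : (Mw n).reverse = Mw n := by
  rw [Mw_eq]
  simp [List.reverse_append, pw_reverse]

lemma pw_succ_eq (n : ℕ) (hn : 4 ≤ n) : pw (n+1) = pw n ++ (tl n ++ pw (n-1)) := by
  obtain ⟨k, rfl⟩ : ∃ k, n = k + 4 := ⟨n - 4, by omega⟩
  have h1 : pw (k+5) = fw (k+4) ++ pw (k+3) := pw_succ_succ (k+3) (by omega)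
  have h2 : fw (k+4) = pw (k+4) ++ tl (k+4) := fw_eq_pw_append (k+4) (by omega)
  rw [h1, h2]
  simp [List.append_assoc]

lemma pw_prefix_succ (n : ℕ) (hn : 3 ≤ n) : pw n <+: pw (n+1) := by
  rcases Nat.lt_or_ge n 4 with h | h
  · have : n = 3 := by omega
    subst this
    have : pw 3 = [] := by decide
    simp [this]
  · rw [pw_succ_eq n h]
    exact List.prefix_append _ _

lemma pw_prefix (n m : ℕ) (hn : 3 ≤ n) (hm : n ≤ m) : pw n <+: pw m := by
  induction m with
  | zero => omega
  | succ K IH =>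
    rcases Nat.lt_or_ge n (K+1) with h | h
    · exact (IH (by omega)).trans (pw_prefix_succ K (by omega))
    · have : n = K + 1 := by omega
      subst this; exact List.prefix_refl _

lemma pw_len_lt (n : ℕ) (hn : 3 ≤ n) : (pw n).length < (pw (n+1)).length := by
  have h1 := pw_len n hn
  have h2 := pw_len (n+1) (by omega)
  have h3 := fw_len_lt n (by omega)
  omega

lemma prefix_get? {α : Type*} {x y : List α} (h : x <+: y) {i : ℕ} (hi : i < x.length) :
    y[i]? = x[i]? := by
  rw [List.getElem?_eq_getElem (hi.trans_le h.length_le), List.getElem?_eq_getElem hi,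
    h.getElem hi]

lemma tl_head (n : ℕ) : (tl n).head? = some (!(bitn n)) := by
  unfold tl bitn
  rcases Nat.mod_two_eq_zero_or_one n with h | h <;> simp [h]

/-- The letter of `pw m` just after the prefix `pw n`. -/
lemma after_letter (n m : ℕ) (hn : 3 ≤ n) (hm : n + 1 ≤ m) :
    (pw m)[(pw n).length]? = some (!(bitn n)) := by
  have step : (pw (n+1))[(pw n).length]? = some (!(bitn n)) := by
    rcases Nat.lt_or_ge n 4 with h | h
    · have : n = 3 := by omega
      subst this; decide
    · rw [pw_succ_eq n h, List.getElem?_append_right (le_refl _), Nat.sub_self]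
      unfold tl bitn
      rcases Nat.mod_two_eq_zero_or_one n with hp | hp <;> simp [hp]
  have hpre : pw (n+1) <+: pw m := pw_prefix (n+1) m (by omega) hm
  have hlt : (pw n).length < (pw (n+1)).length := pw_len_lt n hn
  rw [prefix_get? hpre hlt]
  exact step

/-! Part 4: morphism, desubstitution, no-factor theorems -/

lemma phi_append (u v : List Bool) : phi (u ++ v) = phi u ++ phi v :=
  List.flatMap_append

lemma phi_cons (c : Bool) (w : List Bool) :
    phi (c :: w) = (if c then [false] else [false, true]) ++ phi w := rfl

lemma phi_nil : phi [] = [] := rfl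

lemma phi_ne_nil (w : List Bool) (h : w ≠ []) : phi w ≠ [] := by
  cases w with
  | nil => exact absurd rfl h
  | cons c t =>
    rw [phi_cons]
    cases c <;> simp

lemma phi_head (w : List Bool) (h : w ≠ []) : (phi w).head? = some false := by
  cases w with
  | nil => exact absurd rfl h
  | cons c t =>
    rw [phi_cons]
    cases c <;> simp

lemma fw_phi : ∀ k, 1 ≤ k → fw (k + 1) = phi (fw k) := by
  intro k
  induction k using Nat.strong_induction_on with
  | _ k IH =>
    intro hk
    match k, hk with
    | 1, _ => decide
    | 2, _ => decide
    | (m+3), _ =>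
      have e : fw (m+4) = fw (m+3) ++ fw (m+2) := fw_succ_succ (m+2) (by omega)
      have e2 : fw (m+3) = fw (m+2) ++ fw (m+1) := fw_succ_succ (m+1) (by omega)
      rw [e, e2, phi_append, ← IH (m+2) (by omega) (by omega), ← IH (m+1) (by omega) (by omega)]
      exact (fw_succ_succ (m+2) (by omega))

lemma fw_head (k : ℕ) (hk : 2 ≤ k) : (fw k).head? = some false := by
  induction k using Nat.strong_induction_on with
  | _ k IH =>
    match k, hk with
    | 2, _ => decide
    | 3, _ => decide
    | (m+4), _ =>
      rw [fw_succ_succ (m+2) (by omega),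
        List.head?_append_of_ne_nil _ (fw_ne_nil (m+3) (by omega))]
      exact IH (m+3) (by omega) (by omega)

lemma infix_append_cases {α : Type*} {w u v : List α} (h : w <:+: u ++ v) :
    w <:+: u ∨ w <:+: v ∨
      ∃ w1 w2, w = w1 ++ w2 ∧ w1 ≠ [] ∧ w2 ≠ [] ∧ w1 <:+ u ∧ w2 <+: v := by
  obtain ⟨s, t, hst⟩ := h
  rw [List.append_assoc] at hst
  rcases List.append_eq_append_iff.mp hst with ⟨a', ha1, ha2⟩ | ⟨c', hc1, hc2⟩
  · -- u = s ++ a', w ++ t = a' ++ v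
    rcases List.append_eq_append_iff.mp ha2 with ⟨b', hb1, hb2⟩ | ⟨d', hd1, hd2⟩
    · -- a' = w ++ b', t = b' ++ v : w infix of u
      left
      exact ⟨s, b', by rw [ha1, hb1, List.append_assoc]⟩
    · -- w = a' ++ d', v = d' ++ t
      by_cases hA : a' = []
      · right; left
        subst hA
        simp at hd1
        subst hd1
        exact ⟨[], t, by simp [hd2.symm]⟩
      by_cases hD : d' = []
      · left
        subst hD
        simp at hd1
        exact ⟨s, [], by simp [ha1, hd1]⟩
      · right; right
        exact ⟨a', d', hd1, hA, hD, ⟨s, ha1.symm⟩, ⟨t, hd2.symm⟩⟩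
  · -- s = u ++ c', v = c' ++ w ++ t
    right; left
    exact ⟨c', t, by rw [hc2, List.append_assoc]⟩

lemma two_infix {a b : Bool} {u v : List Bool} (h : [a, b] <:+: u ++ v) :
    [a, b] <:+: u ∨ [a, b] <:+: v ∨ (u.getLast? = some a ∧ v.head? = some b) := by
  rcases infix_append_cases h with h1 | h1 | ⟨w1, w2, he, hn1, hn2, hs, hp⟩
  · exact Or.inl h1
  · exact Or.inr (Or.inl h1)
  · right; right
    have : w1 = [a] ∧ w2 = [b] := by
      match w1, hn1 with
      | [x], _ =>
        simp at he
        obtain ⟨h1', h2'⟩ := he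
        exact ⟨by rw [h1'], by rw [h2']⟩
      | (x :: y :: t'), _ =>
        exfalso
        simp at he
        tauto
    obtain ⟨e1, e2⟩ := this
    subst e1; subst e2
    constructor
    · obtain ⟨s, hs'⟩ := hs
      rw [← hs', List.getLast?_append]
      simp
    · obtain ⟨t, ht'⟩ := hp
      rw [← ht']
      simp

lemma no11 : ∀ k, ¬ ([true, true] <:+: fw k) := by
  intro k
  induction k using Nat.strong_induction_on with
  | _ k IH =>
    match k with
    | 0 => decide
    | 1 => decide
    | 2 => decide
    | 3 => decide
    | (m+4) =>
      intro h
      rw [fw_succ_succ (m+2) (by omega)] at h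
      rcases two_infix h with h1 | h1 | ⟨_, h2⟩
      · exact IH (m+3) (by omega) h1
      · exact IH (m+2) (by omega) h1
      · rw [fw_head (m+2) (by omega)] at h2
        simp at h2

/-! Part 5: phi on pw/Mw, desubstitution, no-factor -/

lemma tl_odd {n : ℕ} (h : n % 2 = 1) : tl n = [false, true] := by unfold tl; rw [if_pos h]
lemma tl_even {n : ℕ} (h : n % 2 = 0) : tl n = [true, false] := by
  unfold tl; rw [if_neg (by omega)]

lemma pw_phi (n : ℕ) (hn : 3 ≤ n) : pw (n + 1) = phi (pw n) ++ [false] := by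
  have h1 : fw (n+1) = phi (fw n) := fw_phi n (by omega)
  have h2 : fw n = pw n ++ tl n := fw_eq_pw_append n hn
  have h3 : fw (n+1) = pw (n+1) ++ tl (n+1) := fw_eq_pw_append (n+1) (by omega)
  rw [h2, phi_append] at h1
  rw [h3] at h1
  rcases Nat.mod_two_eq_zero_or_one n with hp | hp
  · rw [tl_even hp, tl_odd (by omega : (n+1) % 2 = 1)] at h1
    have hv : phi [true, false] = [false, false, true] := by decide
    rw [hv] at h1
    have h1' : pw (n+1) ++ [false, true] = (phi (pw n) ++ [false]) ++ [false, true] := by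
      simpa using h1
    exact List.append_cancel_right h1'
  · rw [tl_odd hp, tl_even (by omega : (n+1) % 2 = 0)] at h1
    have hv : phi [false, true] = [false, true, false] := by decide
    rw [hv] at h1
    have h1' : pw (n+1) ++ [true, false] = (phi (pw n) ++ [false]) ++ [true, false] := by
      simpa using h1
    exact List.append_cancel_right h1'

lemma Mw_rel_odd (n : ℕ) (hn : 3 ≤ n) (hp : n % 2 = 1) :
    Mw (n+1) = phi (Mw n) ++ [false] := by
  have hb : bitn n = true := by unfold bitn; simp [hp]
  have hb1 : bitn (n+1) = false := by unfold bitn; simp; omega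
  rw [Mw_eq, Mw_eq, hb, hb1, pw_phi n hn]
  rw [phi_cons, phi_append]
  have : phi [true] = [false] := by decide
  simp [this]

lemma Mw_rel_even (n : ℕ) (hn : 3 ≤ n) (hp : n % 2 = 0) :
    phi (Mw n) = false :: Mw (n+1) := by
  have hb : bitn n = false := by unfold bitn; simp [hp]
  have hb1 : bitn (n+1) = true := by unfold bitn; simp; omega
  rw [Mw_eq, Mw_eq, hb, hb1, pw_phi n hn]
  rw [phi_cons, phi_append]
  have : phi [false] = [false, true] := by decide
  simp [this]

lemma desub_prefix : ∀ (u w r : List Bool), phi u ++ r = phi w →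
    (r.head? ≠ some true ∨ (phi u).getLast? = some true) → u <+: w := by
  intro u
  induction u with
  | nil => intro w r _ _; exact List.nil_prefix
  | cons c u' IH =>
    intro w r heq hcond
    cases w with
    | nil =>
      exfalso
      rw [phi_nil] at heq
      rcases List.append_eq_nil_iff.mp heq with ⟨h1, _⟩
      exact phi_ne_nil _ (by simp) h1
    | cons b w' =>
      rw [phi_cons, phi_cons] at heq
      cases c <;> cases b
      · -- c = false, b = false
        simp only [if_neg Bool.false_ne_true, List.append_assoc] at heq
        have heq' : phi u' ++ r = phi w' := by
          have := List.append_cancel_left heq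
          exact this
        rcases eq_or_ne u' [] with h | h
        · subst h
          exact ⟨w', rfl⟩
        · have hcond' : r.head? ≠ some true ∨ (phi u').getLast? = some true := by
            rcases hcond with h1 | h1
            · exact Or.inl h1
            · right
              rw [phi_cons] at h1
              rwa [List.getLast?_append, Option.or_of_isSome (by
                simp [Option.isSome_iff_ne_none, List.getLast?_eq_none_iff, phi_ne_nil u' h])] at h1
          exact List.cons_prefix_cons.mpr ⟨rfl, IH w' r heq' hcond'⟩
      · -- c = false, b = true : [false,true] ++ X = [false] ++ phi w'
        exfalso
        simp only [if_pos, if_neg Bool.false_ne_true] at heq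
        simp only [List.cons_append, List.nil_append, List.cons.injEq] at heq
        obtain ⟨_, heq2⟩ := heq
        -- true :: (phi u' ++ r) = phi w'
        rcases eq_or_ne w' [] with h | h
        · subst h; rw [phi_nil] at heq2; simp at heq2
        · have := phi_head w' h
          rw [← heq2] at this
          simp at this
      · -- c = true, b = false : [false] ++ X = [false,true] ++ phi w'
        exfalso
        simp only [if_pos, if_neg Bool.false_ne_true] at heq
        simp only [List.cons_append, List.nil_append, List.cons.injEq] at heq
        obtain ⟨_, heq2⟩ := heq
        -- phi u' ++ r = true :: phi w'
        rcases eq_or_ne u' [] with h | h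
        · subst h
          rw [phi_nil, List.nil_append] at heq2
          -- r = true :: phi w'
          rcases hcond with h1 | h1
          · rw [heq2] at h1; simp at h1
          · rw [phi_cons] at h1
            simp [phi_nil] at h1
        · have hh := congrArg List.head? heq2
          rw [List.head?_append_of_ne_nil _ (phi_ne_nil u' h), phi_head u' h] at hh
          simp at hh
      · -- c = true, b = true
        simp only [if_pos] at heq
        simp only [List.cons_append, List.nil_append, List.cons.injEq] at heq
        obtain ⟨_, heq2⟩ := heq
        rcases eq_or_ne u' [] with h | h
        · subst h
          exact ⟨w', by simp_all⟩
        · have hcond' : r.head? ≠ some true ∨ (phi u').getLast? = some true := by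
            rcases hcond with h1 | h1
            · exact Or.inl h1
            · right
              rw [phi_cons] at h1
              rwa [List.getLast?_append, Option.or_of_isSome (by
                simp [Option.isSome_iff_ne_none, List.getLast?_eq_none_iff, phi_ne_nil u' h])] at h1
          exact List.cons_prefix_cons.mpr ⟨rfl, IH w' r heq2 hcond'⟩

/-! Part 6: infix desubstitution, M_n not a factor -/

lemma desub_infix : ∀ (w l u r : List Bool), l ++ phi u ++ r = phi w → u ≠ [] →
    (r.head? ≠ some true ∨ (phi u).getLast? = some true) → u <:+: w := by
  intro w
  induction w with
  | nil =>
    intro l u r heq hu _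
    exfalso
    rw [phi_nil] at heq
    rcases List.append_eq_nil_iff.mp heq with ⟨h1, _⟩
    rcases List.append_eq_nil_iff.mp h1 with ⟨_, h2⟩
    exact phi_ne_nil u hu h2
  | cons b w' IH =>
    intro l u r heq hu hcond
    cases l with
    | nil =>
      rw [List.nil_append] at heq
      exact (desub_prefix u (b :: w') r heq hcond).isInfix
    | cons d l' =>
      rw [phi_cons] at heq
      cases b
      · -- b = false : block [false, true]
        simp only [if_neg Bool.false_ne_true] at heq
        simp only [List.cons_append, List.nil_append, List.cons.injEq] at heq
        obtain ⟨hd, heq2⟩ := heq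
        -- l' ++ phi u ++ r = true :: phi w'
        cases l' with
        | nil =>
          exfalso
          rw [List.nil_append] at heq2
          have hh := congrArg List.head? heq2
          rw [List.head?_append_of_ne_nil _ (phi_ne_nil u hu), phi_head u hu] at hh
          simp at hh
        | cons e l'' =>
          simp only [List.cons_append, List.cons.injEq] at heq2
          obtain ⟨he, heq3⟩ := heq2
          exact List.infix_cons (IH l'' u r heq3 hu hcond)
      · -- b = true : block [false]
        simp only [if_pos] at heq
        simp only [List.cons_append, List.nil_append, List.cons.injEq] at heq
        obtain ⟨hd, heq2⟩ := heq
        exact List.infix_cons (IH l' u r heq2 hu hcond)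

lemma Mw_ne_nil (n : ℕ) : Mw n ≠ [] := by
  rw [Mw_eq]; simp

lemma Mw_head (n : ℕ) : (Mw n).head? = some (bitn n) := by
  rw [Mw_eq]; simp

lemma Mw_getLast (n : ℕ) : (Mw n).getLast? = some (bitn n) := by
  rw [Mw_eq]
  have h : (bitn n :: (pw n ++ [bitn n])) = (bitn n :: pw n) ++ [bitn n] := by simp
  rw [h, List.getLast?_append]
  simp

lemma M_not_infix_fw : ∀ n, 3 ≤ n → ∀ k, ¬ (Mw n <:+: fw k) := by
  intro n
  induction n using Nat.strong_induction_on with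
  | _ n IH =>
    intro hn k h
    match n, hn with
    | 3, _ =>
      have : Mw 3 = [true, true] := by decide
      rw [this] at h
      exact no11 k h
    | (s+4), _ =>
      -- k must be ≥ 2 by length
      have hlen : (Mw (s+4)).length ≤ (fw k).length := h.length_le
      have hM : 3 ≤ (Mw (s+4)).length := by
        rw [Mw_len (s+4) (by omega)]
        have : (fw 4).length ≤ (fw (s+4)).length := fw_len_mono 4 (s+4) (by omega) (by omega)
        rw [show (fw 4).length = 3 by decide] at this; exact this
      have hk2 : 2 ≤ k := by
        by_contra hc
        have hk01 : (fw k).length ≤ 1 := by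
          interval_cases k <;> simp [fw]
        omega
      obtain ⟨kk, rfl⟩ : ∃ kk, k = kk + 1 := ⟨k - 1, by omega⟩
      have hphi : fw (kk+1) = phi (fw kk) := fw_phi kk (by omega)
      obtain ⟨l, r, hlr⟩ := h
      rcases Nat.mod_two_eq_zero_or_one (s+3) with hp | hp
      · -- s+3 even: Mw (s+4) starts with true; extend left
        have hrel : phi (Mw (s+3)) = false :: Mw (s+4) := Mw_rel_even (s+3) (by omega) hp
        have hhead : (Mw (s+4)).head? = some true := by
          rw [Mw_head]
          unfold bitn
          simp; omega
        cases l with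
        | nil =>
          rw [List.nil_append] at hlr
          have := congrArg List.head? hlr
          rw [List.head?_append_of_ne_nil _ (Mw_ne_nil _), hhead, fw_head (kk+1) hk2] at this
          simp at this
        | cons c l0 =>
          -- consider last element of (c :: l0)
          obtain ⟨e, l1, hle⟩ := List.exists_cons_of_ne_nil (l := (c :: l0).reverse)
            (by simp)
          have hl : c :: l0 = l1.reverse ++ [e] := by
            rw [← List.reverse_reverse (c :: l0), hle]
            simp
          cases e
          · -- preceding letter false: desubstitute
            rw [hl, List.append_assoc, List.append_assoc] at hlr
            -- l1.reverse ++ ([false] ++ (Mw (s+4) ++ r)) = fw (kk+1)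
            have hlr' : l1.reverse ++ phi (Mw (s+3)) ++ r = phi (fw kk) := by
              rw [← hphi, ← hlr, hrel]
              simp
            have hcond : r.head? ≠ some true ∨ (phi (Mw (s+3))).getLast? = some true := by
              right
              rw [hrel]
              have h2 : false :: Mw (s+4) = [false] ++ Mw (s+4) := rfl
              rw [h2, List.getLast?_append, Mw_getLast]
              have : bitn (s+4) = true := by unfold bitn; simp; omega
              rw [this]
              rfl
            exact IH (s+3) (by omega) (by omega) kk
              (desub_infix (fw kk) l1.reverse (Mw (s+3)) r hlr' (Mw_ne_nil _) hcond)
          · -- preceding letter true: two true's adjacent, contradiction with no11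
            exfalso
            apply no11 (kk+1)
            obtain ⟨MM, hMM⟩ := List.exists_cons_of_ne_nil (Mw_ne_nil (s+4))
            obtain ⟨M2, hM2⟩ := hMM
            have hMhead : MM = true := by
              have := Mw_head (s+4)
              rw [hM2] at this
              simp at this
              rw [this]
              unfold bitn; simp; omega
            refine ⟨l1.reverse, M2 ++ r, ?_⟩
            rw [← hlr, hl, hM2, hMhead]
            simp
      · -- s+3 odd: Mw (s+4) = phi (Mw (s+3)) ++ [false]
        have hrel : Mw (s+4) = phi (Mw (s+3)) ++ [false] := Mw_rel_odd (s+3) (by omega) hp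
        have hlr' : l ++ phi (Mw (s+3)) ++ ([false] ++ r) = phi (fw kk) := by
          rw [← hphi, ← hlr, hrel]
          simp
        have hcond : ([false] ++ r).head? ≠ some true ∨
            (phi (Mw (s+3))).getLast? = some true := by
          left; simp
        exact IH (s+3) (by omega) (by omega) kk
          (desub_infix (fw kk) l (Mw (s+3)) ([false] ++ r) hlr' (Mw_ne_nil _) hcond)

/-! Part 7: M_n not a factor of M_m, take lemmas -/

lemma pw_len_lt' (n m : ℕ) (hn : 3 ≤ n) (hm : n < m) : (pw n).length < (pw m).length := by
  have h1 := pw_len n hn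
  have h2 := pw_len m (by omega)
  have := fw_len_strict n m (by omega) hm
  omega

/-- `Mw m` restricted to the length of `Mw n` differs from `Mw n` (n < m). -/
lemma Mw_take_ne (n m : ℕ) (hn : 3 ≤ n) (hm : n < m) :
    (Mw m).take (Mw n).length ≠ Mw n := by
  intro h
  have hlen : (Mw n).length ≤ (Mw m).length := by
    rw [Mw_len n hn, Mw_len m (by omega)]
    exact le_of_lt (fw_len_strict n m (by omega) hm)
  by_cases hb : bitn n = bitn m
  · -- same parity: compare at position |Mw n| - 1 = |pw n| + 1
    have hMn : (Mw n).length = (pw n).length + 2 := by rw [Mw_eq]; simp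
    set i := (pw n).length + 1 with hi
    have h1 : (Mw n)[i]? = some (bitn n) := by
      rw [Mw_eq, hi, List.getElem?_cons_succ, List.getElem?_append_right (le_refl _), Nat.sub_self]
      rfl
    have hlt : (pw n).length < (pw m).length := pw_len_lt' n m hn hm
    have h2 : (Mw m)[i]? = some (!(bitn n)) := by
      rw [Mw_eq, hi, List.getElem?_cons_succ, List.getElem?_append,
        if_pos hlt]
      exact after_letter n m hn (by omega)
    have h3 : ((Mw m).take (Mw n).length)[i]? = (Mw m)[i]? := by
      rw [List.getElem?_take_of_lt (by omega)]
    rw [h, h1] at h3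
    rw [h2] at h3
    simp at h3
  · -- opposite parity: first letters differ
    have h1 : (Mw n)[0]? = some (bitn n) := by rw [Mw_eq]; rfl
    have h2 : ((Mw m).take (Mw n).length)[0]? = some (bitn m) := by
      rw [List.getElem?_take_of_lt (by rw [Mw_eq]; simp), Mw_eq]
      rfl
    rw [h, h1] at h2
    simp at h2
    exact hb h2

lemma M_not_infix_M (n m : ℕ) (hn : 3 ≤ n) (hm : n < m) : ¬ (Mw n <:+: Mw m) := by
  intro h
  obtain ⟨s, t, hst⟩ := h
  rcases eq_or_ne s [] with hs | hs
  · subst hs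
    rw [List.nil_append] at hst
    apply Mw_take_ne n m hn hm
    rw [← hst]
    simp
  rcases eq_or_ne t [] with ht | ht
  · subst ht
    rw [List.append_nil] at hst
    -- Mw n is a suffix of Mw m; use palindromes
    have hsuf : Mw n <:+ Mw m := ⟨s, hst⟩
    have hpre : Mw n <+: Mw m := by
      rw [← Mw_reverse n, ← Mw_reverse m]
      exact List.reverse_prefix.mpr hsuf
    obtain ⟨t', ht'⟩ := hpre
    apply Mw_take_ne n m hn hm
    rw [← ht']
    simp
  · -- interior occurrence: Mw n is a factor of pw m hence of fw m
    apply M_not_infix_fw n hn m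
    obtain ⟨c, s', hs'⟩ := List.exists_cons_of_ne_nil hs
    obtain ⟨e, t1, hte⟩ := List.exists_cons_of_ne_nil (l := t.reverse) (by simp [ht])
    have htt : t = t1.reverse ++ [e] := by
      rw [← List.reverse_reverse t, hte]; simp
    rw [hs', htt] at hst
    have hst2 : c :: (s' ++ Mw n ++ t1.reverse ++ [e]) =
        bitn m :: (pw m ++ [bitn m]) := by
      rw [← Mw_eq, ← hst]
      simp
    have hc : s' ++ Mw n ++ t1.reverse ++ [e] = pw m ++ [bitn m] :=
      (List.cons_eq_cons.mp hst2).2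
    have hmid : s' ++ Mw n ++ t1.reverse = pw m := List.append_inj_left' hc rfl
    have : Mw n <:+: pw m := ⟨s', t1.reverse, by rw [← hmid]⟩
    have hpwfw : pw m <:+: fw m := by
      unfold pw
      exact ((List.dropLast_prefix _).trans (List.dropLast_prefix _)).isInfix
    exact this.trans hpwfw

/-! Part 8: correlation characterization -/

lemma prefix_iff_get {α : Type*} {x y : List α} :
    x <+: y ↔ (x.length ≤ y.length ∧ ∀ i, i < x.length → y[i]? = x[i]?) := by
  constructor
  · intro h
    exact ⟨h.length_le, fun i hi => prefix_get? h hi⟩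
  · rintro ⟨hl, hg⟩
    rw [List.prefix_iff_eq_take]
    apply List.ext_getElem?
    intro i
    rcases Nat.lt_or_ge i x.length with hi | hi
    · rw [List.getElem?_take_of_lt hi]
      exact (hg i hi).symm
    · rw [List.getElem?_eq_none_iff.mpr hi, List.getElem?_eq_none_iff.mpr]
      rw [List.length_take]
      omega

lemma corr_char {u v : List Bool} {k : ℕ} (hk : k < u.length)
    (hlen : u.length - k ≤ v.length) : corr u v k ↔ u.drop k <+: v := by
  constructor
  · intro h
    rw [prefix_iff_get]
    constructor
    · rw [List.length_drop]; exact hlen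
    · intro i hi
      rw [List.length_drop] at hi
      rw [List.getElem?_drop]
      exact (h (k + i) i (by omega) (by omega) (by omega)).symm
  · intro h i j hi hj hij
    have hj' : j < u.length - k := by omega
    have := prefix_get? h (i := j) (by rw [List.length_drop]; omega)
    rw [List.getElem?_drop] at this
    rw [hij, Nat.add_comm j k, this]

lemma corr_char2 {u v : List Bool} {k : ℕ} (hk : k < u.length)
    (hlen : v.length ≤ u.length - k) : corr u v k ↔ v <+: u.drop k := by
  constructor
  · intro h
    rw [prefix_iff_get]
    constructor
    · rw [List.length_drop]; exact hlen
    · intro i hi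
      rw [List.getElem?_drop]
      exact h (k + i) i (by omega) (by omega) (by omega)
  · intro h i j hi hj hij
    have := prefix_get? h hj
    rw [List.getElem?_drop] at this
    rw [hij, Nat.add_comm j k, ← this]

/-- K1: for palindromes, the suffix of length ℓ is the reverse of the prefix. -/
lemma pal_drop {w : List Bool} (hw : w.reverse = w) (ℓ : ℕ) :
    w.drop (w.length - ℓ) = (w.take ℓ).reverse := by
  rw [List.reverse_take, hw]

/-! Part 9: the key lemma -/

def Qp (n m ℓ : ℕ) : Prop :=
  (Mw n).take ℓ = (Mw m).take ℓ ∧ ((Mw n).take ℓ).reverse = (Mw n).take ℓ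

lemma Mw_len' (x : ℕ) : (Mw x).length = (pw x).length + 2 := by
  rw [Mw_eq]; simp

lemma Mw_get_zero (x : ℕ) : (Mw x)[0]? = some (bitn x) := by
  rw [Mw_eq]; rfl

lemma Mw_get_mid (x j : ℕ) (hj : j < (pw x).length) :
    (Mw x)[(j+1)]? = (pw x)[j]? := by
  rw [Mw_eq, List.getElem?_cons_succ, List.getElem?_append,
    if_pos hj]

lemma Mw_get_last (x : ℕ) : (Mw x)[((pw x).length + 1)]? = some (bitn x) := by
  rw [Mw_eq, List.getElem?_cons_succ, List.getElem?_append_right (le_refl _), Nat.sub_self]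
  rfl

lemma Mw_take (x j : ℕ) (hj : j ≤ (pw x).length) :
    (Mw x).take (j+1) = bitn x :: (pw x).take j := by
  rw [Mw_eq, List.take_succ_cons, List.take_append_of_le_length hj]

lemma common_prefix (n m : ℕ) (hn : 3 ≤ n) (hnm : n ≤ m) (hb : bitn n = bitn m)
    (ℓ : ℕ) (hℓ : ℓ ≤ (pw n).length + 1) : (Mw n).take ℓ = (Mw m).take ℓ := by
  cases ℓ with
  | zero => simp
  | succ j =>
    have hjn : j ≤ (pw n).length := by omega
    have hjm : j ≤ (pw m).length := by
      rcases eq_or_lt_of_le hnm with rfl | hlt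
      · exact hjn
      · have := pw_len_lt' n m hn hlt
        omega
    rw [Mw_take n j hjn, Mw_take m j hjm, hb]
    congr 1
    obtain ⟨t, ht⟩ := pw_prefix n m hn hnm
    rw [← ht, List.take_append_of_le_length hjn]

/-- The key lemma (★): an overlap between M_n and M_m forces a common border. -/
lemma star (n m : ℕ) (hn : 3 ≤ n) (hnm : n ≤ m) (ℓ : ℕ) (h1 : 1 ≤ ℓ)
    (h2 : ℓ ≤ (Mw n).length)
    (h : (Mw m).take ℓ = ((Mw n).take ℓ).reverse) :
    (Mw n).take ℓ = (Mw m).take ℓ := by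
  have hNn := Mw_len' n
  have hNm := Mw_len' m
  have hpwle : (pw n).length ≤ (pw m).length := by
    rcases eq_or_lt_of_le hnm with rfl | hlt
    · exact le_rfl
    · exact le_of_lt (pw_len_lt' n m hn hlt)
  by_cases hb : bitn n = bitn m
  · -- same parity
    rcases Nat.lt_or_ge ℓ ((pw n).length + 2) with hc | hc
    · exact common_prefix n m hn hnm hb ℓ (by omega)
    · -- ℓ = |Mw n|
      have hℓeq : ℓ = (Mw n).length := by omega
      rcases eq_or_lt_of_le hnm with rfl | hlt
      · rfl
      · exfalso
        apply Mw_take_ne n m hn hlt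
        rw [hℓeq, List.take_length] at h
        rw [h, Mw_reverse]
  · -- opposite parity: derive a contradiction
    exfalso
    have hltake : ((Mw n).take ℓ).length = ℓ := by
      rw [List.length_take]; omega
    -- position 0
    have e0 : (Mw m)[0]? = (Mw n)[(ℓ - 1)]? := by
      have h0 : ((Mw n).take ℓ).reverse[0]? = ((Mw n).take ℓ)[(ℓ - 1)]? := by
        rw [List.getElem?_reverse (by omega), hltake]
        congr 1
      have h0' : ((Mw n).take ℓ)[(ℓ - 1)]? = (Mw n)[(ℓ - 1)]? := by
        rw [List.getElem?_take_of_lt (by omega)]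
      have h0'' : ((Mw m).take ℓ)[0]? = (Mw m)[0]? := by
        rw [List.getElem?_take_of_lt (by omega)]
      rw [← h0'', h, h0, h0']
    -- position ℓ-1
    have e1 : (Mw m)[(ℓ - 1)]? = (Mw n)[0]? := by
      have h0 : ((Mw n).take ℓ).reverse[(ℓ - 1)]? = ((Mw n).take ℓ)[0]? := by
        rw [List.getElem?_reverse (by omega), hltake]
        congr 1
        omega
      have h0' : ((Mw n).take ℓ)[0]? = (Mw n)[0]? := by
        rw [List.getElem?_take_of_lt (by omega)]
      have h0'' : ((Mw m).take ℓ)[(ℓ - 1)]? = (Mw m)[(ℓ - 1)]? := by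
        rw [List.getElem?_take_of_lt (by omega)]
      rw [← h0'', h, h0, h0']
    rw [Mw_get_zero] at e0 e1
    -- case on ℓ - 1
    rcases Nat.eq_or_lt_of_le h1 with hℓ1 | hℓ1
    · -- ℓ = 1
      have hz : ℓ - 1 = 0 := by omega
      rw [hz, Mw_get_zero] at e1
      exact hb (by injection e1 with e; rw [e])
    rcases Nat.lt_or_ge (ℓ - 1) ((pw n).length + 1) with hc | hc
    · -- middle: 1 ≤ ℓ-1 ≤ |pw n|
      obtain ⟨j, hj⟩ : ∃ j, ℓ - 1 = j + 1 := ⟨ℓ - 2, by omega⟩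
      have hjn : j < (pw n).length := by omega
      have hjm : j < (pw m).length := by omega
      rw [hj, Mw_get_mid n j hjn] at e0
      rw [hj, Mw_get_mid m j hjm] at e1
      have : (pw n)[j]? = (pw m)[j]? := by
        obtain ⟨t, ht⟩ := pw_prefix n m hn hnm
        rw [(prefix_get? ⟨t, ht⟩ hjn : (pw m)[j]? = (pw n)[j]?)]
      rw [this, e1] at e0
      exact hb (by injection e0 with e; rw [e])
    · -- ℓ - 1 = |pw n| + 1, i.e. ℓ = |Mw n|
      have : ℓ - 1 = (pw n).length + 1 := by omega
      rw [this, Mw_get_last] at e0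
      exact hb (by injection e0 with e; rw [e])

/-! Part 10: overlaps and borders via Qp -/

lemma take_len_M (n : ℕ) {ℓ : ℕ} (h : ℓ ≤ (Mw n).length) : ((Mw n).take ℓ).length = ℓ := by
  rw [List.length_take]; omega

lemma S_iff (n m : ℕ) (hn : 3 ≤ n) (hnm : n ≤ m) (ℓ : ℕ) (h1 : 1 ≤ ℓ)
    (h2 : ℓ ≤ (Mw n).length) :
    ((Mw n).drop ((Mw n).length - ℓ) <+: Mw m) ↔ Qp n m ℓ := by
  rw [pal_drop (Mw_reverse n) ℓ, List.prefix_iff_eq_take, List.length_reverse,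
    take_len_M n h2]
  constructor
  · intro h
    have h' : (Mw m).take ℓ = ((Mw n).take ℓ).reverse := h.symm
    have hQ1 := star n m hn hnm ℓ h1 h2 h'
    refine ⟨hQ1, ?_⟩
    rw [← h', ← hQ1]
  · rintro ⟨hQ1, hQ2⟩
    rw [hQ2, hQ1]

lemma T_iff (n m : ℕ) (hn : 3 ≤ n) (hnm : n ≤ m) (ℓ : ℕ) (h1 : 1 ≤ ℓ)
    (h2 : ℓ ≤ (Mw n).length) :
    ((Mw m).drop ((Mw m).length - ℓ) <+: Mw n) ↔ Qp n m ℓ := by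
  have hm3 : 3 ≤ m := by omega
  have hNM : (Mw n).length ≤ (Mw m).length := by
    rw [Mw_len n hn, Mw_len m hm3]
    exact fw_len_mono n m (by omega) hnm
  rw [pal_drop (Mw_reverse m) ℓ, List.prefix_iff_eq_take, List.length_reverse,
    take_len_M m (by omega)]
  have hrev : ((Mw m).take ℓ).reverse = (Mw n).take ℓ ↔
      (Mw m).take ℓ = ((Mw n).take ℓ).reverse := by
    constructor
    · intro h; rw [← h, List.reverse_reverse]
    · intro h; rw [h, List.reverse_reverse]
  rw [hrev]
  constructor
  · intro h'
    have hQ1 := star n m hn hnm ℓ h1 h2 h'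
    refine ⟨hQ1, ?_⟩
    rw [← h', ← hQ1]
  · rintro ⟨hQ1, hQ2⟩
    rw [← hQ1, hQ2]

lemma mem_borderFinset {b w : List Bool} :
    b ∈ borderFinset w ↔ (b ≠ [] ∧ b <+: w ∧ b <:+ w) := by
  unfold borderFinset
  rw [Finset.mem_filter]
  simp only [Finset.mem_image, Finset.mem_range]
  constructor
  · rintro ⟨⟨k, hk, rfl⟩, hne, hsuf⟩
    exact ⟨hne, List.take_prefix _ _, hsuf⟩
  · rintro ⟨hne, hpre, hsuf⟩
    refine ⟨⟨b.length, by have := hpre.length_le; omega, ?_⟩, hne, hsuf⟩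
    exact (List.prefix_iff_eq_take.mp hpre).symm

lemma suffix_iff_rev {b w : List Bool} (hw : w.reverse = w) :
    b <:+ w ↔ b.reverse <+: w := by
  rw [← List.reverse_prefix, hw]

lemma border_char (n m : ℕ) (hn : 3 ≤ n) (hnm : n ≤ m) (b : List Bool) :
    b ∈ borderFinset (Mw n) ∩ borderFinset (Mw m) ↔
      ∃ ℓ, 1 ≤ ℓ ∧ ℓ ≤ (Mw n).length ∧ Qp n m ℓ ∧ b = (Mw n).take ℓ := by
  rw [Finset.mem_inter, mem_borderFinset, mem_borderFinset]
  constructor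
  · rintro ⟨⟨hne, hpn, hsn⟩, ⟨_, hpm, hsm⟩⟩
    refine ⟨b.length, by have := List.length_pos_iff.mpr hne; omega, hpn.length_le, ⟨?_, ?_⟩, ?_⟩
    · rw [← List.prefix_iff_eq_take.mp hpn, ← List.prefix_iff_eq_take.mp hpm]
    · have hrevp : b.reverse <+: Mw n := (suffix_iff_rev (Mw_reverse n)).mp hsn
      have e1 : b.reverse = (Mw n).take b.length := by
        have := List.prefix_iff_eq_take.mp hrevp
        rwa [List.length_reverse] at this
      rw [← List.prefix_iff_eq_take.mp hpn, e1, ← List.prefix_iff_eq_take.mp hpn]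
    · exact List.prefix_iff_eq_take.mp hpn
  · rintro ⟨ℓ, h1, h2, ⟨hQ1, hQ2⟩, rfl⟩
    have hlen := take_len_M n h2
    have hNM : (Mw n).length ≤ (Mw m).length := by
      rw [Mw_len n hn, Mw_len m (by omega)]
      exact fw_len_mono n m (by omega) hnm
    have hne : (Mw n).take ℓ ≠ [] := by
      intro hh
      rw [hh] at hlen
      simp at hlen
      omega
    refine ⟨⟨hne, List.take_prefix _ _, ?_⟩, ⟨hne, ?_, ?_⟩⟩
    · rw [suffix_iff_rev (Mw_reverse n), hQ2]
      exact List.take_prefix _ _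
    · rw [hQ1]; exact List.take_prefix _ _
    · rw [suffix_iff_rev (Mw_reverse m), hQ2, hQ1]
      exact List.take_prefix _ _

/-! Part 11: assembly -/

open scoped Classical in
lemma corrA (n m : ℕ) (hn : 3 ≤ n) (hnm : n ≤ m) :
    corrPoly (Mw n) (Mw m) = ∑ j ∈ Finset.range (Mw n).length,
      if Qp n m (j+1) then (Polynomial.X : Polynomial ℤ) ^ j else 0 := by
  unfold corrPoly
  set N := (Mw n).length with hN
  have hNM : (Mw n).length ≤ (Mw m).length := by
    rw [Mw_len n hn, Mw_len m (by omega)]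
    exact fw_len_mono n m (by omega) hnm
  rw [← Finset.sum_range_reflect
    (fun j => if Qp n m (j+1) then (Polynomial.X : Polynomial ℤ) ^ j else 0) N]
  apply Finset.sum_congr rfl
  intro k hk
  rw [Finset.mem_range] at hk
  have hco : corr (Mw n) (Mw m) k ↔ Qp n m (N - k) := by
    rw [corr_char hk (by omega)]
    have hdk : k = (Mw n).length - (N - k) := by omega
    rw [show (Mw n).drop k = (Mw n).drop ((Mw n).length - (N - k)) by rw [← hdk]]
    exact S_iff n m hn hnm (N - k) (by omega) (by omega)
  beta_reduce
  rw [show N - 1 - k + 1 = N - k by omega]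
  by_cases hq : Qp n m (N - k)
  · rw [if_pos (hco.mpr hq), if_pos hq]
  · rw [if_neg (fun hc => hq (hco.mp hc)), if_neg hq]

open scoped Classical in
lemma corrB (n m : ℕ) (hn : 3 ≤ n) (hnm : n ≤ m) :
    corrPoly (Mw m) (Mw n) = ∑ j ∈ Finset.range (Mw n).length,
      if Qp n m (j+1) then (Polynomial.X : Polynomial ℤ) ^ j else 0 := by
  unfold corrPoly
  set N := (Mw n).length with hN
  set M := (Mw m).length with hM
  have hNM : N ≤ M := by
    rw [hN, hM, Mw_len n hn, Mw_len m (by omega)]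
    exact fw_len_mono n m (by omega) hnm
  set F : ℕ → Polynomial ℤ :=
    fun j => if j < N ∧ Qp n m (j+1) then (Polynomial.X : Polynomial ℤ) ^ j else 0 with hF
  have step1 : ∑ k ∈ Finset.range M,
      (if corr (Mw m) (Mw n) k then (Polynomial.X : Polynomial ℤ) ^ (M - 1 - k) else 0)
      = ∑ k ∈ Finset.range M, F (M - 1 - k) := by
    apply Finset.sum_congr rfl
    intro k hk
    rw [Finset.mem_range] at hk
    rw [hF]
    beta_reduce
    rw [show M - 1 - k + 1 = M - k by omega]
    by_cases hlow : M - k ≤ N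
    · have hco : corr (Mw m) (Mw n) k ↔ Qp n m (M - k) := by
        rw [corr_char hk (by omega)]
        have hdk : k = (Mw m).length - (M - k) := by omega
        rw [show (Mw m).drop k = (Mw m).drop ((Mw m).length - (M - k)) by rw [← hdk]]
        exact T_iff n m hn hnm (M - k) (by omega) hlow
      have hj : M - 1 - k < N := by omega
      by_cases hq : Qp n m (M - k)
      · rw [if_pos (hco.mpr hq), if_pos ⟨hj, hq⟩]
      · rw [if_neg (fun hc => hq (hco.mp hc)), if_neg (fun hc => hq hc.2)]
    · have hnm' : n < m := by
        rcases eq_or_lt_of_le hnm with rfl | hlt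
        · omega
        · exact hlt
      have hcf : ¬ corr (Mw m) (Mw n) k := by
        rw [corr_char2 hk (by omega)]
        intro hpre
        obtain ⟨t, ht⟩ := hpre
        apply M_not_infix_M n m hn hnm'
        exact ⟨(Mw m).take k, t, by rw [List.append_assoc, ht, List.take_append_drop]⟩
      have hj : ¬ (M - 1 - k < N) := by omega
      rw [if_neg hcf, if_neg (fun hc => hj hc.1)]
  rw [step1, Finset.sum_range_reflect F M]
  rw [← Finset.sum_subset (Finset.range_subset_range.mpr hNM)]
  · apply Finset.sum_congr rfl
    intro j hj
    rw [Finset.mem_range] at hj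
    rw [hF]
    beta_reduce
    simp only [hj, true_and]
  · intro j _ hj
    rw [Finset.mem_range] at hj
    rw [hF]
    beta_reduce
    exact if_neg (fun hc => hj hc.1)

open scoped Classical in
lemma borderC (n m : ℕ) (hn : 3 ≤ n) (hnm : n ≤ m) :
    (∑ b ∈ borderFinset (Mw n) ∩ borderFinset (Mw m),
      (Polynomial.X : Polynomial ℤ) ^ (b.length - 1)) =
    ∑ j ∈ Finset.range (Mw n).length,
      if Qp n m (j+1) then (Polynomial.X : Polynomial ℤ) ^ j else 0 := by
  rw [← Finset.sum_filter]
  refine Finset.sum_bij' (i := fun b _ => b.length - 1)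
    (j := fun j _ => (Mw n).take (j+1)) ?hi ?hj ?li ?ri ?hval
  case hi =>
    intro b hb
    obtain ⟨ℓ, h1, h2, hQ, rfl⟩ := (border_char n m hn hnm b).mp hb
    have hlen := take_len_M n h2
    rw [Finset.mem_filter, Finset.mem_range, hlen]
    refine ⟨by omega, ?_⟩
    rw [show ℓ - 1 + 1 = ℓ by omega]
    exact hQ
  case hj =>
    intro j hj
    rw [Finset.mem_filter, Finset.mem_range] at hj
    exact (border_char n m hn hnm _).mpr ⟨j+1, by omega, by omega, hj.2, rfl⟩
  case li =>
    intro b hb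
    obtain ⟨ℓ, h1, h2, hQ, rfl⟩ := (border_char n m hn hnm b).mp hb
    have hlen := take_len_M n h2
    rw [hlen, show ℓ - 1 + 1 = ℓ by omega]
  case ri =>
    intro j hj
    rw [Finset.mem_filter, Finset.mem_range] at hj
    rw [take_len_M n (show j + 1 ≤ (Mw n).length by omega)]
    omega
  case hval =>
    intro b hb
    rfl

theorem stmt19 (n m : ℕ) (hn : 3 ≤ n) (hnm : n ≤ m) :
    corrPoly (Mw n) (Mw m) = corrPoly (Mw m) (Mw n) ∧
    corrPoly (Mw n) (Mw m) =
      ∑ b ∈ borderFinset (Mw n) ∩ borderFinset (Mw m),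
        Polynomial.X ^ (b.length - 1) := by
  classical
  constructor
  · rw [corrA n m hn hnm, corrB n m hn hnm]
  · rw [corrA n m hn hnm, borderC n m hn hnm]
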